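/- Let Q_{C_T}(f)(x) = ∫_0^x f(y) f(x−y) dy − 2 f(x) ∫_0^{L−x} f(y) dy and Q_{F_T}(f)(x) = 2∫_x^L f(y)/y dy − f(x) on [0,L]. Then the map f ↦ Q_{C_T}(f) + Q_{F_T}(f) is locally Lipschitz from L¹([0,L]) to L¹([0,L]): for every R > 0 there is a constant C(R,L) such that ‖Q(f) − Q(g)‖_{L¹} ≤ C ‖f − g‖_{L¹} for all f, g with ‖f‖_{L¹}, ‖g‖_{L¹} ≤ R. -/

import Mathlib

open MeasureTheory

/-- The coagulation-fragmentation operator of the truncated model C',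
`Q(f) = Q_{C_T}(f) + Q_{F_T}(f)`. -/
noncomputable def QCF (L : ℝ) (f : ℝ → ℝ) (x : ℝ) : ℝ :=
  (∫ y in Set.Icc 0 x, f y * f (x - y)) - 2 * f x * (∫ y in Set.Icc 0 (L - x), f y)
    + (2 * (∫ y in Set.Icc x L, f y / y) - f x)

namespace QCFAux

open Set ENNReal

def S (L : ℝ) : Set (ℝ × ℝ) := {p | 0 ≤ p.2 ∧ p.2 ≤ p.1 ∧ p.1 ≤ L}

lemma measurableSet_S (L : ℝ) : MeasurableSet (S L) := by
  unfold S
  simp only [Set.setOf_and]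
  exact (measurableSet_le measurable_const measurable_snd).inter
    ((measurableSet_le measurable_snd measurable_fst).inter
      (measurableSet_le measurable_fst measurable_const))

lemma swap_tri (L : ℝ) (k : ℝ → ℝ → ℝ≥0∞) (hk : Measurable (Function.uncurry k)) :
    ∫⁻ x in Icc 0 L, ∫⁻ y in Icc 0 x, k x y = ∫⁻ y in Icc 0 L, ∫⁻ x in Icc y L, k x y := by
  have hK : Measurable ((S L).indicator (Function.uncurry k)) :=
    hk.indicator (measurableSet_S L)
  have e1 : ∫⁻ x in Icc 0 L, ∫⁻ y in Icc 0 x, k x y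
      = ∫⁻ x, ∫⁻ y, (S L).indicator (Function.uncurry k) (x, y) := by
    rw [← lintegral_indicator measurableSet_Icc]
    congr 1
    funext x
    by_cases hx : x ∈ Icc (0:ℝ) L
    · rw [Set.indicator_of_mem hx, ← lintegral_indicator measurableSet_Icc]
      congr 1; funext y
      by_cases hy : y ∈ Icc (0:ℝ) x
      · rw [Set.indicator_of_mem hy, Set.indicator_of_mem (show (x,y) ∈ S L from ⟨hy.1, hy.2, hx.2⟩)]
        rfl
      · rw [Set.indicator_of_notMem hy, Set.indicator_of_notMem]
        intro hm; exact hy ⟨hm.1, hm.2.1⟩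
    · rw [Set.indicator_of_notMem hx]
      have h0 : ∀ y : ℝ, (S L).indicator (Function.uncurry k) (x, y) = 0 := by
        intro y
        apply Set.indicator_of_notMem
        intro hm
        exact hx ⟨le_trans hm.1 hm.2.1, hm.2.2⟩
      simp only [h0, lintegral_zero]
  have e2 : ∫⁻ y in Icc 0 L, ∫⁻ x in Icc y L, k x y
      = ∫⁻ y, ∫⁻ x, (S L).indicator (Function.uncurry k) (x, y) := by
    rw [← lintegral_indicator measurableSet_Icc]
    congr 1
    funext y
    by_cases hy : y ∈ Icc (0:ℝ) L
    · rw [Set.indicator_of_mem hy, ← lintegral_indicator measurableSet_Icc]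
      congr 1; funext x
      by_cases hx : x ∈ Icc y L
      · rw [Set.indicator_of_mem hx, Set.indicator_of_mem (show (x,y) ∈ S L from ⟨hy.1, hx.1, hx.2⟩)]
        rfl
      · rw [Set.indicator_of_notMem hx, Set.indicator_of_notMem]
        intro hm; exact hx ⟨hm.2.1, hm.2.2⟩
    · rw [Set.indicator_of_notMem hy]
      have h0 : ∀ x : ℝ, (S L).indicator (Function.uncurry k) (x, y) = 0 := by
        intro x
        apply Set.indicator_of_notMem
        intro hm
        exact hy ⟨hm.1, le_trans hm.2.1 hm.2.2⟩
      simp only [h0, lintegral_zero]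
  rw [e1, e2]
  exact lintegral_lintegral_swap hK.aemeasurable

lemma lint_shift (g : ℝ → ℝ≥0∞) (y L : ℝ) :
    ∫⁻ x in Icc y L, g (x - y) = ∫⁻ t in Icc 0 (L - y), g t := by
  have h := (measurePreserving_sub_right volume y).setLIntegral_comp_emb
      (MeasurableEquiv.subRight y).measurableEmbedding g (Icc y L)
  rw [show ((· - y) '' Icc y L) = Icc 0 (L - y) by
    rw [Set.image_sub_const_Icc, sub_self]] at h
  exact h


lemma hT1 : MeasurableSet {p : ℝ × ℝ | 0 ≤ p.2 ∧ p.2 ≤ p.1} := by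
  simp only [Set.setOf_and]
  exact (measurableSet_le measurable_const measurable_snd).inter
    (measurableSet_le measurable_snd measurable_fst)

lemma sm_conv {f h : ℝ → ℝ} (hf : Measurable f) (hh : Measurable h) :
    StronglyMeasurable fun x : ℝ => ∫ y in Icc 0 x, f y * h (x - y) := by
  have hK : StronglyMeasurable
      ({p : ℝ × ℝ | 0 ≤ p.2 ∧ p.2 ≤ p.1}.indicator fun p => f p.2 * h (p.1 - p.2)) :=
    (((hf.comp measurable_snd).mul
      (hh.comp (measurable_fst.sub measurable_snd))).indicator hT1).stronglyMeasurable
  have h1 : (fun x : ℝ => ∫ y in Icc 0 x, f y * h (x - y))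
      = fun x : ℝ => ∫ y, {p : ℝ × ℝ | 0 ≤ p.2 ∧ p.2 ≤ p.1}.indicator
          (fun p => f p.2 * h (p.1 - p.2)) (x, y) := by
    funext x
    rw [← integral_indicator measurableSet_Icc]
    congr 1
  rw [h1]
  exact hK.integral_prod_right'

lemma sm_mass (L : ℝ) {f : ℝ → ℝ} (hf : Measurable f) :
    StronglyMeasurable fun x : ℝ => ∫ y in Icc 0 (L - x), f y := by
  have hT : MeasurableSet {p : ℝ × ℝ | 0 ≤ p.2 ∧ p.2 ≤ L - p.1} := by
    simp only [Set.setOf_and]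
    exact (measurableSet_le measurable_const measurable_snd).inter
      (measurableSet_le measurable_snd (measurable_const.sub measurable_fst))
  have hK : StronglyMeasurable
      ({p : ℝ × ℝ | 0 ≤ p.2 ∧ p.2 ≤ L - p.1}.indicator fun p => f p.2) :=
    ((hf.comp measurable_snd).indicator hT).stronglyMeasurable
  have h1 : (fun x : ℝ => ∫ y in Icc 0 (L - x), f y)
      = fun x : ℝ => ∫ y, {p : ℝ × ℝ | 0 ≤ p.2 ∧ p.2 ≤ L - p.1}.indicator
          (fun p => f p.2) (x, y) := by
    funext x
    rw [← integral_indicator measurableSet_Icc]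
    congr 1
  rw [h1]
  exact hK.integral_prod_right'

lemma sm_frag (L : ℝ) {f : ℝ → ℝ} (hf : Measurable f) :
    StronglyMeasurable fun x : ℝ => ∫ y in Icc x L, f y / y := by
  have hT : MeasurableSet {p : ℝ × ℝ | p.1 ≤ p.2 ∧ p.2 ≤ L} := by
    simp only [Set.setOf_and]
    exact (measurableSet_le measurable_fst measurable_snd).inter
      (measurableSet_le measurable_snd measurable_const)
  have hK : StronglyMeasurable
      ({p : ℝ × ℝ | p.1 ≤ p.2 ∧ p.2 ≤ L}.indicator fun p => f p.2 / p.2) :=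
    (((hf.comp measurable_snd).div measurable_snd).indicator hT).stronglyMeasurable
  have h1 : (fun x : ℝ => ∫ y in Icc x L, f y / y)
      = fun x : ℝ => ∫ y, {p : ℝ × ℝ | p.1 ≤ p.2 ∧ p.2 ≤ L}.indicator
          (fun p => f p.2 / p.2) (x, y) := by
    funext x
    rw [← integral_indicator measurableSet_Icc]
    congr 1
  rw [h1]
  exact hK.integral_prod_right'

lemma meas_lint_conv {f h : ℝ → ℝ} (hf : Measurable f) (hh : Measurable h) :
    Measurable fun x : ℝ => ∫⁻ y in Icc 0 x, (‖f y * h (x - y)‖₊ : ℝ≥0∞) := by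
  have hK : Measurable
      ({p : ℝ × ℝ | 0 ≤ p.2 ∧ p.2 ≤ p.1}.indicator
        fun p => ((‖f p.2 * h (p.1 - p.2)‖₊ : ℝ≥0∞))) :=
    (((hf.comp measurable_snd).mul
      (hh.comp (measurable_fst.sub measurable_snd))).nnnorm.coe_nnreal_ennreal).indicator hT1
  have h1 : (fun x : ℝ => ∫⁻ y in Icc 0 x, (‖f y * h (x - y)‖₊ : ℝ≥0∞))
      = fun x : ℝ => ∫⁻ y, {p : ℝ × ℝ | 0 ≤ p.2 ∧ p.2 ≤ p.1}.indicator
          (fun p => ((‖f p.2 * h (p.1 - p.2)‖₊ : ℝ≥0∞))) (x, y) := by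
    funext x
    rw [← lintegral_indicator measurableSet_Icc]
    congr 1
  rw [h1]
  exact hK.lintegral_prod_right'


lemma conv_lint (L : ℝ) {f h : ℝ → ℝ} (hf : Measurable f) (hh : Measurable h) :
    ∫⁻ x in Icc 0 L, ∫⁻ y in Icc 0 x, (‖f y * h (x - y)‖₊ : ℝ≥0∞)
      ≤ (∫⁻ y in Icc 0 L, (‖f y‖₊ : ℝ≥0∞)) * ∫⁻ y in Icc 0 L, (‖h y‖₊ : ℝ≥0∞) := by
  have hk : Measurable (Function.uncurry fun x y : ℝ => (‖f y * h (x - y)‖₊ : ℝ≥0∞)) :=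
    (((hf.comp measurable_snd).mul
      (hh.comp (measurable_fst.sub measurable_snd))).nnnorm.coe_nnreal_ennreal)
  rw [swap_tri L _ hk]
  calc ∫⁻ y in Icc 0 L, ∫⁻ x in Icc y L, (‖f y * h (x - y)‖₊ : ℝ≥0∞)
      ≤ ∫⁻ y in Icc 0 L, (‖f y‖₊ : ℝ≥0∞) * ∫⁻ t in Icc 0 L, (‖h t‖₊ : ℝ≥0∞) := by
        apply setLIntegral_mono' measurableSet_Icc
        intro y hy
        have e1 : ∫⁻ x in Icc y L, (‖f y * h (x - y)‖₊ : ℝ≥0∞)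
            = (‖f y‖₊ : ℝ≥0∞) * ∫⁻ x in Icc y L, (‖h (x - y)‖₊ : ℝ≥0∞) := by
          simp_rw [nnnorm_mul, ENNReal.coe_mul]
          exact lintegral_const_mul'' _
            ((hh.comp (measurable_id.sub_const y)).nnnorm.coe_nnreal_ennreal).aemeasurable
        rw [e1, lint_shift (fun t => (‖h t‖₊ : ℝ≥0∞)) y L]
        exact mul_le_mul_right (lintegral_mono_set (Icc_subset_Icc le_rfl (by linarith [hy.1]))) _
    _ = (∫⁻ y in Icc 0 L, (‖f y‖₊ : ℝ≥0∞)) * ∫⁻ t in Icc 0 L, (‖h t‖₊ : ℝ≥0∞) := by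
        rw [lintegral_mul_const'' _ (hf.nnnorm.coe_nnreal_ennreal.aemeasurable)]

lemma conv_main (L : ℝ) {f h : ℝ → ℝ} (hf : Measurable f) (hh : Measurable h)
    (hfi : IntegrableOn f (Icc 0 L)) (hhi : IntegrableOn h (Icc 0 L)) :
    IntegrableOn (fun x => ∫ y in Icc 0 x, f y * h (x - y)) (Icc 0 L) ∧
    (∫ x in Icc 0 L, |∫ y in Icc 0 x, f y * h (x - y)|)
      ≤ (∫ x in Icc 0 L, |f x|) * (∫ x in Icc 0 L, |h x|) ∧
    (∀ᵐ x ∂(volume.restrict (Icc 0 L)), IntegrableOn (fun y => f y * h (x - y)) (Icc 0 x)) := by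
  set Ff : ℝ≥0∞ := ∫⁻ y in Icc 0 L, (‖f y‖₊ : ℝ≥0∞) with hFf
  set Fh : ℝ≥0∞ := ∫⁻ y in Icc 0 L, (‖h y‖₊ : ℝ≥0∞) with hFh
  have hFf_ne : Ff ≠ ⊤ := hfi.2.ne
  have hFh_ne : Fh ≠ ⊤ := hhi.2.ne
  have key := conv_lint L hf hh
  have hT_ne : (∫⁻ x in Icc 0 L, ∫⁻ y in Icc 0 x, (‖f y * h (x - y)‖₊ : ℝ≥0∞)) ≠ ⊤ :=
    (lt_of_le_of_lt key (ENNReal.mul_lt_top hFf_ne.lt_top hFh_ne.lt_top)).ne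
  have hsm : StronglyMeasurable fun x : ℝ => ∫ y in Icc 0 x, f y * h (x - y) := sm_conv hf hh
  have hmono : ∫⁻ x in Icc 0 L, (‖∫ y in Icc 0 x, f y * h (x - y)‖₊ : ℝ≥0∞)
      ≤ ∫⁻ x in Icc 0 L, ∫⁻ y in Icc 0 x, (‖f y * h (x - y)‖₊ : ℝ≥0∞) :=
    lintegral_mono fun x => enorm_integral_le_lintegral_enorm _
  have hint : IntegrableOn (fun x => ∫ y in Icc 0 x, f y * h (x - y)) (Icc 0 L) :=
    ⟨hsm.aestronglyMeasurable, lt_of_le_of_lt hmono hT_ne.lt_top⟩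
  refine ⟨hint, ?_, ?_⟩
  · have e1 : ∫ x in Icc 0 L, |∫ y in Icc 0 x, f y * h (x - y)|
        = (∫⁻ x in Icc 0 L, (‖∫ y in Icc 0 x, f y * h (x - y)‖₊ : ℝ≥0∞)).toReal := by
      simp only [← enorm_eq_nnnorm]
      rw [← integral_norm_eq_lintegral_enorm hsm.aestronglyMeasurable]
      simp only [Real.norm_eq_abs]
    have e2 : ∫ x in Icc 0 L, |f x| = Ff.toReal := by
      rw [hFf]; simp only [← enorm_eq_nnnorm]; rw [← integral_norm_eq_lintegral_enorm hfi.1]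
      simp only [Real.norm_eq_abs]
    have e3 : ∫ x in Icc 0 L, |h x| = Fh.toReal := by
      rw [hFh]; simp only [← enorm_eq_nnnorm]; rw [← integral_norm_eq_lintegral_enorm hhi.1]
      simp only [Real.norm_eq_abs]
    rw [e1, e2, e3, ← ENNReal.toReal_mul]
    exact ENNReal.toReal_mono (ENNReal.mul_ne_top hFf_ne hFh_ne) (le_trans hmono key)
  · have hae := ae_lt_top (meas_lint_conv hf hh) hT_ne
    filter_upwards [hae] with x hx
    exact ⟨((hf.mul (hh.comp (measurable_id.const_sub x)))).aestronglyMeasurable, hx⟩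


lemma frag_lint (L : ℝ) {f : ℝ → ℝ} (hf : Measurable f) :
    ∫⁻ x in Icc 0 L, ∫⁻ y in Icc x L, (‖f y / y‖₊ : ℝ≥0∞)
      ≤ ∫⁻ y in Icc 0 L, (‖f y‖₊ : ℝ≥0∞) := by
  have hk : Measurable (Function.uncurry fun a _ : ℝ => (‖f a / a‖₊ : ℝ≥0∞)) :=
    ((hf.comp measurable_fst).div measurable_fst).nnnorm.coe_nnreal_ennreal
  rw [← swap_tri L _ hk]
  apply setLIntegral_mono' measurableSet_Icc
  intro a ha
  rw [setLIntegral_const, Real.volume_Icc, sub_zero]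
  rcases eq_or_lt_of_le ha.1 with h0 | h0
  · simp [← h0]
  · have e1 : (‖f a / a‖₊ : ℝ≥0∞) = ENNReal.ofReal (|f a| / a) := by
      rw [← enorm_eq_nnnorm, Real.enorm_eq_ofReal_abs, abs_div, abs_of_pos h0]
    rw [e1, ← ENNReal.ofReal_mul (div_nonneg (abs_nonneg _) h0.le),
      div_mul_cancel₀ _ h0.ne', ← Real.enorm_eq_ofReal_abs, enorm_eq_nnnorm]

lemma frag_main (L : ℝ) {f : ℝ → ℝ} (hf : Measurable f)
    (hfi : IntegrableOn f (Icc 0 L)) :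
    IntegrableOn (fun x => ∫ y in Icc x L, f y / y) (Icc 0 L) ∧
    (∫ x in Icc 0 L, |∫ y in Icc x L, f y / y|) ≤ ∫ x in Icc 0 L, |f x| := by
  have hFf_ne : (∫⁻ y in Icc 0 L, (‖f y‖₊ : ℝ≥0∞)) ≠ ⊤ := hfi.2.ne
  have key := frag_lint L hf
  have hsm := sm_frag L hf
  have hmono : ∫⁻ x in Icc 0 L, (‖∫ y in Icc x L, f y / y‖₊ : ℝ≥0∞)
      ≤ ∫⁻ x in Icc 0 L, ∫⁻ y in Icc x L, (‖f y / y‖₊ : ℝ≥0∞) :=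
    lintegral_mono fun x => enorm_integral_le_lintegral_enorm _
  have hint : IntegrableOn (fun x => ∫ y in Icc x L, f y / y) (Icc 0 L) :=
    ⟨hsm.aestronglyMeasurable, lt_of_le_of_lt hmono (lt_of_le_of_lt key hFf_ne.lt_top)⟩
  refine ⟨hint, ?_⟩
  have e1 : ∫ x in Icc 0 L, |∫ y in Icc x L, f y / y|
      = (∫⁻ x in Icc 0 L, (‖∫ y in Icc x L, f y / y‖₊ : ℝ≥0∞)).toReal := by
    simp only [← enorm_eq_nnnorm]
    rw [← integral_norm_eq_lintegral_enorm hsm.aestronglyMeasurable]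
    simp only [Real.norm_eq_abs]
  have e2 : ∫ x in Icc 0 L, |f x| = (∫⁻ y in Icc 0 L, (‖f y‖₊ : ℝ≥0∞)).toReal := by
    simp only [← enorm_eq_nnnorm]
    rw [← integral_norm_eq_lintegral_enorm hfi.1]
    simp only [Real.norm_eq_abs]
  rw [e1, e2]
  exact ENNReal.toReal_mono hFf_ne (le_trans hmono key)

lemma int_div {L : ℝ} {f : ℝ → ℝ} (hf : Measurable f) (hfi : IntegrableOn f (Icc 0 L))
    {x : ℝ} (hx : 0 < x) : IntegrableOn (fun y => f y / y) (Icc x L) := by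
  have h1 : IntegrableOn f (Icc x L) := hfi.mono_set (Icc_subset_Icc hx.le le_rfl)
  refine Integrable.mono' (h1.abs.mul_const x⁻¹)
    ((hf.div measurable_id).aestronglyMeasurable) ?_
  filter_upwards [ae_restrict_mem measurableSet_Icc] with y hy
  have hy0 : 0 < y := lt_of_lt_of_le hx hy.1
  rw [Real.norm_eq_abs, abs_div, abs_of_pos hy0, div_eq_mul_inv]
  exact mul_le_mul_of_nonneg_left (inv_anti₀ hx hy.1) (abs_nonneg _)

lemma mass_bound {L : ℝ} {f : ℝ → ℝ} (hfi : IntegrableOn f (Icc 0 L)) {x : ℝ}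
    (hx : x ∈ Icc 0 L) :
    |∫ y in Icc 0 (L - x), f y| ≤ ∫ y in Icc 0 L, |f y| := by
  have hsub : Icc (0:ℝ) (L - x) ⊆ Icc 0 L := Icc_subset_Icc le_rfl (by linarith [hx.1])
  calc |∫ y in Icc 0 (L - x), f y| ≤ ∫ y in Icc 0 (L - x), |f y| := by
        rw [← Real.norm_eq_abs]
        refine (norm_integral_le_integral_norm _).trans ?_
        simp only [Real.norm_eq_abs, le_refl]
    _ ≤ ∫ y in Icc 0 L, |f y| :=
        setIntegral_mono_set hfi.abs (ae_of_all _ fun y => abs_nonneg _)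
          (HasSubset.Subset.eventuallyLE hsub)


lemma main_meas (L : ℝ) (R : ℝ) {f g : ℝ → ℝ}
    (hfm : Measurable f) (hgm : Measurable g)
    (hfi : IntegrableOn f (Icc 0 L)) (hgi : IntegrableOn g (Icc 0 L))
    (hfR : (∫ x in Icc 0 L, |f x|) ≤ R) (hgR : (∫ x in Icc 0 L, |g x|) ≤ R) :
    IntegrableOn (QCF L f) (Icc 0 L) ∧ IntegrableOn (QCF L g) (Icc 0 L) ∧
    (∫ x in Icc 0 L, |QCF L f x - QCF L g x|)
      ≤ (6 * R + 3) * ∫ x in Icc 0 L, |f x - g x| := by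
  have hdm : Measurable fun x => f x - g x := hfm.sub hgm
  have hdi : IntegrableOn (fun x => f x - g x) (Icc 0 L) := hfi.sub hgi
  have δ0 : 0 ≤ ∫ x in Icc 0 L, |f x - g x| := integral_nonneg fun x => abs_nonneg _
  have hRf0 : 0 ≤ ∫ x in Icc 0 L, |f x| := integral_nonneg fun x => abs_nonneg _
  -- convolution pieces
  obtain ⟨hAf_int, -, hAf_ae⟩ := conv_main L hfm hfm hfi hfi
  obtain ⟨hAg_int, -, hAg_ae⟩ := conv_main L hgm hgm hgi hgi
  have hconv1 := conv_main L hfm hdm hfi hdi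
  have ha1_int : IntegrableOn
      (fun x => ∫ y in Icc 0 x, f y * (f (x - y) - g (x - y))) (Icc 0 L) := hconv1.1
  have ha1_bd : (∫ x in Icc 0 L, |∫ y in Icc 0 x, f y * (f (x - y) - g (x - y))|)
      ≤ (∫ x in Icc 0 L, |f x|) * (∫ x in Icc 0 L, |f x - g x|) := hconv1.2.1
  have ha1_ae : ∀ᵐ x ∂(volume.restrict (Icc 0 L)),
      IntegrableOn (fun y => f y * (f (x - y) - g (x - y))) (Icc 0 x) := hconv1.2.2
  have hconv2 := conv_main L hdm hgm hdi hgi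
  have ha2_int : IntegrableOn
      (fun x => ∫ y in Icc 0 x, (f y - g y) * g (x - y)) (Icc 0 L) := hconv2.1
  have ha2_bd : (∫ x in Icc 0 L, |∫ y in Icc 0 x, (f y - g y) * g (x - y)|)
      ≤ (∫ x in Icc 0 L, |f x - g x|) * (∫ x in Icc 0 L, |g x|) := hconv2.2.1
  have ha2_ae : ∀ᵐ x ∂(volume.restrict (Icc 0 L)),
      IntegrableOn (fun y => (f y - g y) * g (x - y)) (Icc 0 x) := hconv2.2.2
  -- fragmentation pieces
  obtain ⟨hDf_int, -⟩ := frag_main L hfm hfi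
  obtain ⟨hDg_int, -⟩ := frag_main L hgm hgi
  have hfragd := frag_main L hdm hdi
  have hDd_int : IntegrableOn (fun x => ∫ y in Icc x L, (f y - g y) / y) (Icc 0 L) :=
    hfragd.1
  have hDd_bd : (∫ x in Icc 0 L, |∫ y in Icc x L, (f y - g y) / y|)
      ≤ ∫ x in Icc 0 L, |f x - g x| := hfragd.2
  -- mass pieces
  have hBf_int : IntegrableOn (fun x => f x * ∫ y in Icc 0 (L - x), f y) (Icc 0 L) := by
    refine Integrable.mono' (hfi.abs.mul_const (∫ x in Icc 0 L, |f x|))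
      ((hfm.mul (sm_mass L hfm).measurable).aestronglyMeasurable) ?_
    filter_upwards [ae_restrict_mem measurableSet_Icc] with x hx
    rw [Real.norm_eq_abs, abs_mul]
    exact mul_le_mul_of_nonneg_left (mass_bound hfi hx) (abs_nonneg _)
  have hBg_int : IntegrableOn (fun x => g x * ∫ y in Icc 0 (L - x), g y) (Icc 0 L) := by
    refine Integrable.mono' (hgi.abs.mul_const (∫ x in Icc 0 L, |g x|))
      ((hgm.mul (sm_mass L hgm).measurable).aestronglyMeasurable) ?_
    filter_upwards [ae_restrict_mem measurableSet_Icc] with x hx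
    rw [Real.norm_eq_abs, abs_mul]
    exact mul_le_mul_of_nonneg_left (mass_bound hgi hx) (abs_nonneg _)
  have hm1_int : IntegrableOn
      (fun x => |f x - g x| * |∫ y in Icc 0 (L - x), f y|) (Icc 0 L) := by
    refine Integrable.mono' (hdi.abs.mul_const (∫ x in Icc 0 L, |f x|))
      ((hdm.abs.mul (sm_mass L hfm).measurable.abs).aestronglyMeasurable) ?_
    filter_upwards [ae_restrict_mem measurableSet_Icc] with x hx
    rw [Real.norm_eq_abs, abs_of_nonneg (mul_nonneg (abs_nonneg _) (abs_nonneg _))]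
    exact mul_le_mul_of_nonneg_left (mass_bound hfi hx) (abs_nonneg _)
  have hm2_int : IntegrableOn
      (fun x => |g x| * |∫ y in Icc 0 (L - x), f y - g y|) (Icc 0 L) := by
    refine Integrable.mono' (hgi.abs.mul_const (∫ x in Icc 0 L, |f x - g x|))
      ((hgm.abs.mul (sm_mass L hdm).measurable.abs).aestronglyMeasurable) ?_
    filter_upwards [ae_restrict_mem measurableSet_Icc] with x hx
    rw [Real.norm_eq_abs, abs_of_nonneg (mul_nonneg (abs_nonneg _) (abs_nonneg _))]
    exact mul_le_mul_of_nonneg_left (mass_bound hdi hx) (abs_nonneg _)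
  -- integrability of QCF
  have hQf_eq : QCF L f = fun x => (∫ y in Icc 0 x, f y * f (x - y))
      - 2 * (f x * ∫ y in Icc 0 (L - x), f y)
      + (2 * (∫ y in Icc x L, f y / y) - f x) := by
    funext x; simp only [QCF]; ring
  have hQf_int : IntegrableOn (QCF L f) (Icc 0 L) := by
    rw [hQf_eq]
    exact (hAf_int.sub (hBf_int.const_mul 2)).add ((hDf_int.const_mul 2).sub hfi)
  have hQg_eq : QCF L g = fun x => (∫ y in Icc 0 x, g y * g (x - y))
      - 2 * (g x * ∫ y in Icc 0 (L - x), g y)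
      + (2 * (∫ y in Icc x L, g y / y) - g x) := by
    funext x; simp only [QCF]; ring
  have hQg_int : IntegrableOn (QCF L g) (Icc 0 L) := by
    rw [hQg_eq]
    exact (hAg_int.sub (hBg_int.const_mul 2)).add ((hDg_int.const_mul 2).sub hgi)
  refine ⟨hQf_int, hQg_int, ?_⟩
  -- pointwise a.e. bound
  have h0 : ∀ᵐ x ∂(volume.restrict (Icc (0:ℝ) L)), x ≠ 0 := by
    refine ae_restrict_of_ae ?_
    have hset : {x : ℝ | ¬ x ≠ 0} = {0} := by ext t; simp
    rw [ae_iff, hset]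
    exact Real.volume_singleton
  have hptwise : ∀ᵐ x ∂(volume.restrict (Icc (0:ℝ) L)),
      |QCF L f x - QCF L g x| ≤
        |∫ y in Icc 0 x, f y * (f (x - y) - g (x - y))|
        + |∫ y in Icc 0 x, (f y - g y) * g (x - y)|
        + 2 * (|f x - g x| * |∫ y in Icc 0 (L - x), f y|
            + |g x| * |∫ y in Icc 0 (L - x), f y - g y|)
        + 2 * |∫ y in Icc x L, (f y - g y) / y| + |f x - g x| := by
    filter_upwards [ae_restrict_mem measurableSet_Icc, h0, hAf_ae, hAg_ae, ha1_ae, ha2_ae]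
      with x hx hx0 hAf hAg ha1 ha2
    have hxpos : 0 < x := (hx.1).lt_of_ne (Ne.symm hx0)
    have hss : Icc (0:ℝ) (L - x) ⊆ Icc 0 L := Icc_subset_Icc le_rfl (by linarith [hx.1])
    have hconv : (∫ y in Icc 0 x, f y * f (x - y)) - (∫ y in Icc 0 x, g y * g (x - y))
        = (∫ y in Icc 0 x, f y * (f (x - y) - g (x - y)))
          + ∫ y in Icc 0 x, (f y - g y) * g (x - y) := by
      rw [← integral_sub hAf hAg, ← integral_add ha1 ha2]
      apply integral_congr_ae
      apply ae_of_all
      intro y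
      ring
    have hmass : (∫ y in Icc 0 (L - x), f y) - (∫ y in Icc 0 (L - x), g y)
        = ∫ y in Icc 0 (L - x), f y - g y :=
      (integral_sub (hfi.mono_set hss) (hgi.mono_set hss)).symm
    have hfrag : (∫ y in Icc x L, f y / y) - (∫ y in Icc x L, g y / y)
        = ∫ y in Icc x L, (f y - g y) / y := by
      rw [← integral_sub (int_div hfm hfi hxpos) (int_div hgm hgi hxpos)]
      apply integral_congr_ae
      apply ae_of_all
      intro y
      simp [sub_div]
    have hkey : QCF L f x - QCF L g x
        = ((∫ y in Icc 0 x, f y * (f (x - y) - g (x - y)))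
            + ∫ y in Icc 0 x, (f y - g y) * g (x - y))
          - 2 * ((f x - g x) * (∫ y in Icc 0 (L - x), f y)
              + g x * ∫ y in Icc 0 (L - x), f y - g y)
          + (2 * (∫ y in Icc x L, (f y - g y) / y) - (f x - g x)) := by
      rw [← hconv, ← hfrag, ← hmass]
      simp only [QCF]
      ring
    rw [hkey]
    have t1 := abs_add_le
      (((∫ y in Icc 0 x, f y * (f (x - y) - g (x - y)))
          + ∫ y in Icc 0 x, (f y - g y) * g (x - y))
        - 2 * ((f x - g x) * (∫ y in Icc 0 (L - x), f y)
            + g x * ∫ y in Icc 0 (L - x), f y - g y))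
      (2 * (∫ y in Icc x L, (f y - g y) / y) - (f x - g x))
    have t2 := abs_sub
      ((∫ y in Icc 0 x, f y * (f (x - y) - g (x - y)))
          + ∫ y in Icc 0 x, (f y - g y) * g (x - y))
      (2 * ((f x - g x) * (∫ y in Icc 0 (L - x), f y)
          + g x * ∫ y in Icc 0 (L - x), f y - g y))
    have t3 := abs_add_le (∫ y in Icc 0 x, f y * (f (x - y) - g (x - y)))
      (∫ y in Icc 0 x, (f y - g y) * g (x - y))
    have t4 := abs_sub (2 * ∫ y in Icc x L, (f y - g y) / y) (f x - g x)
    have t5 := abs_add_le ((f x - g x) * ∫ y in Icc 0 (L - x), f y)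
      (g x * ∫ y in Icc 0 (L - x), f y - g y)
    have e1 : |2 * ((f x - g x) * (∫ y in Icc 0 (L - x), f y)
        + g x * ∫ y in Icc 0 (L - x), f y - g y)|
        = 2 * |(f x - g x) * (∫ y in Icc 0 (L - x), f y)
            + g x * ∫ y in Icc 0 (L - x), f y - g y| := by
      rw [abs_mul]; norm_num
    have e2 : |2 * ∫ y in Icc x L, (f y - g y) / y|
        = 2 * |∫ y in Icc x L, (f y - g y) / y| := by
      rw [abs_mul]; norm_num
    have e3 : |(f x - g x) * ∫ y in Icc 0 (L - x), f y|
        = |f x - g x| * |∫ y in Icc 0 (L - x), f y| := abs_mul _ _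
    have e4 : |g x * ∫ y in Icc 0 (L - x), f y - g y|
        = |g x| * |∫ y in Icc 0 (L - x), f y - g y| := abs_mul _ _
    linarith [t1, t2, t3, t4, t5, e1, e2, e3, e4]
  -- integrate the bound
  have hbound_int : Integrable (fun x =>
      |∫ y in Icc 0 x, f y * (f (x - y) - g (x - y))|
      + |∫ y in Icc 0 x, (f y - g y) * g (x - y)|
      + 2 * (|f x - g x| * |∫ y in Icc 0 (L - x), f y|
          + |g x| * |∫ y in Icc 0 (L - x), f y - g y|)
      + 2 * |∫ y in Icc x L, (f y - g y) / y| + |f x - g x|)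
      (volume.restrict (Icc 0 L)) :=
    ((((ha1_int.abs.add ha2_int.abs).add
      ((hm1_int.add hm2_int).const_mul 2)).add (hDd_int.abs.const_mul 2)).add hdi.abs)
  have hmain : (∫ x in Icc 0 L, |QCF L f x - QCF L g x|)
      ≤ ∫ x in Icc 0 L,
        (|∫ y in Icc 0 x, f y * (f (x - y) - g (x - y))|
        + |∫ y in Icc 0 x, (f y - g y) * g (x - y)|
        + 2 * (|f x - g x| * |∫ y in Icc 0 (L - x), f y|
            + |g x| * |∫ y in Icc 0 (L - x), f y - g y|)
        + 2 * |∫ y in Icc x L, (f y - g y) / y| + |f x - g x|) :=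
    integral_mono_ae (hQf_int.sub hQg_int).abs hbound_int hptwise
  have k1 : Integrable (fun x => |∫ y in Icc 0 x, f y * (f (x - y) - g (x - y))|)
      (volume.restrict (Icc 0 L)) := ha1_int.abs
  have k2 : Integrable (fun x => |∫ y in Icc 0 x, (f y - g y) * g (x - y)|)
      (volume.restrict (Icc 0 L)) := ha2_int.abs
  have k5 : Integrable (fun x => 2 * |∫ y in Icc x L, (f y - g y) / y|)
      (volume.restrict (Icc 0 L)) := hDd_int.abs.const_mul 2
  have k6 : Integrable (fun x => |f x - g x|) (volume.restrict (Icc 0 L)) := hdi.abs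
  have j2 : Integrable (fun x => 2 * (|f x - g x| * |∫ y in Icc 0 (L - x), f y|
      + |g x| * |∫ y in Icc 0 (L - x), f y - g y|)) (volume.restrict (Icc 0 L)) :=
    (hm1_int.add hm2_int).const_mul 2
  have j1 : Integrable (fun x => |∫ y in Icc 0 x, f y * (f (x - y) - g (x - y))|
      + |∫ y in Icc 0 x, (f y - g y) * g (x - y)|) (volume.restrict (Icc 0 L)) := k1.add k2
  have j12 : Integrable (fun x => |∫ y in Icc 0 x, f y * (f (x - y) - g (x - y))|
      + |∫ y in Icc 0 x, (f y - g y) * g (x - y)|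
      + 2 * (|f x - g x| * |∫ y in Icc 0 (L - x), f y|
          + |g x| * |∫ y in Icc 0 (L - x), f y - g y|)) (volume.restrict (Icc 0 L)) := j1.add j2
  have j123 : Integrable (fun x => |∫ y in Icc 0 x, f y * (f (x - y) - g (x - y))|
      + |∫ y in Icc 0 x, (f y - g y) * g (x - y)|
      + 2 * (|f x - g x| * |∫ y in Icc 0 (L - x), f y|
          + |g x| * |∫ y in Icc 0 (L - x), f y - g y|)
      + 2 * |∫ y in Icc x L, (f y - g y) / y|) (volume.restrict (Icc 0 L)) := j12.add k5
  have hsplit : (∫ x in Icc 0 L,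
        (|∫ y in Icc 0 x, f y * (f (x - y) - g (x - y))|
        + |∫ y in Icc 0 x, (f y - g y) * g (x - y)|
        + 2 * (|f x - g x| * |∫ y in Icc 0 (L - x), f y|
            + |g x| * |∫ y in Icc 0 (L - x), f y - g y|)
        + 2 * |∫ y in Icc x L, (f y - g y) / y| + |f x - g x|))
      = (∫ x in Icc 0 L, |∫ y in Icc 0 x, f y * (f (x - y) - g (x - y))|)
        + (∫ x in Icc 0 L, |∫ y in Icc 0 x, (f y - g y) * g (x - y)|)
        + 2 * ((∫ x in Icc 0 L, |f x - g x| * |∫ y in Icc 0 (L - x), f y|)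
            + ∫ x in Icc 0 L, |g x| * |∫ y in Icc 0 (L - x), f y - g y|)
        + 2 * (∫ x in Icc 0 L, |∫ y in Icc x L, (f y - g y) / y|)
        + ∫ x in Icc 0 L, |f x - g x| := by
    rw [integral_add j123 k6, integral_add j12 k5, integral_add j1 j2,
      integral_add k1 k2, integral_const_mul 2, integral_const_mul 2,
      integral_add hm1_int hm2_int]
  -- bound each summand
  have B3 : (∫ x in Icc 0 L, |f x - g x| * |∫ y in Icc 0 (L - x), f y|)
      ≤ R * ∫ x in Icc 0 L, |f x - g x| := by
    have : (∫ x in Icc 0 L, |f x - g x| * |∫ y in Icc 0 (L - x), f y|)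
        ≤ ∫ x in Icc 0 L, R * |f x - g x| := by
      refine integral_mono_ae hm1_int (hdi.abs.const_mul R) ?_
      filter_upwards [ae_restrict_mem measurableSet_Icc] with x hx
      rw [mul_comm R]
      exact mul_le_mul_of_nonneg_left ((mass_bound hfi hx).trans hfR) (abs_nonneg _)
    rwa [integral_const_mul] at this
  have B4 : (∫ x in Icc 0 L, |g x| * |∫ y in Icc 0 (L - x), f y - g y|)
      ≤ R * ∫ x in Icc 0 L, |f x - g x| := by
    have h1 : (∫ x in Icc 0 L, |g x| * |∫ y in Icc 0 (L - x), f y - g y|)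
        ≤ ∫ x in Icc 0 L, |g x| * (∫ t in Icc 0 L, |f t - g t|) := by
      refine integral_mono_ae hm2_int (hgi.abs.mul_const _) ?_
      filter_upwards [ae_restrict_mem measurableSet_Icc] with x hx
      exact mul_le_mul_of_nonneg_left (mass_bound hdi hx) (abs_nonneg _)
    rw [integral_mul_const] at h1
    calc (∫ x in Icc 0 L, |g x| * |∫ y in Icc 0 (L - x), f y - g y|)
        ≤ (∫ x in Icc 0 L, |g x|) * (∫ t in Icc 0 L, |f t - g t|) := h1
      _ ≤ R * ∫ x in Icc 0 L, |f x - g x| := mul_le_mul_of_nonneg_right hgR δ0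
  have B1 : (∫ x in Icc 0 L, |∫ y in Icc 0 x, f y * (f (x - y) - g (x - y))|)
      ≤ R * ∫ x in Icc 0 L, |f x - g x| :=
    ha1_bd.trans (mul_le_mul_of_nonneg_right hfR δ0)
  have B2 : (∫ x in Icc 0 L, |∫ y in Icc 0 x, (f y - g y) * g (x - y)|)
      ≤ R * ∫ x in Icc 0 L, |f x - g x| := by
    refine ha2_bd.trans ?_
    rw [mul_comm]
    exact mul_le_mul_of_nonneg_right hgR δ0
  calc (∫ x in Icc 0 L, |QCF L f x - QCF L g x|) ≤ _ := hmain
    _ = _ := hsplit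
    _ ≤ (6 * R + 3) * ∫ x in Icc 0 L, |f x - g x| := by linarith [B1, B2, B3, B4, hDd_bd]


lemma QCF_congr (L : ℝ) {f f₁ : ℝ → ℝ}
    (h : ∀ᵐ y ∂(volume : Measure ℝ), y ∈ Icc 0 L → f y = f₁ y) :
    QCF L f =ᵐ[volume.restrict (Icc (0:ℝ) L)] QCF L f₁ := by
  filter_upwards [ae_restrict_mem measurableSet_Icc, ae_restrict_of_ae h] with x hx hfx
  have hx0 := hx.1
  have hxL := hx.2
  have e1 : (∫ y in Icc 0 x, f y * f (x - y)) = ∫ y in Icc 0 x, f₁ y * f₁ (x - y) := by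
    apply integral_congr_ae
    have h2 : ∀ᵐ y ∂(volume : Measure ℝ), x - y ∈ Icc 0 L → f (x - y) = f₁ (x - y) :=
      (Measure.measurePreserving_sub_left volume x).quasiMeasurePreserving.tendsto_ae.eventually h
    filter_upwards [ae_restrict_mem measurableSet_Icc, ae_restrict_of_ae h,
      ae_restrict_of_ae h2] with y hy h1' h2'
    have hyI : y ∈ Icc (0:ℝ) L := ⟨hy.1, le_trans hy.2 hxL⟩
    have hxyI : x - y ∈ Icc (0:ℝ) L := ⟨by linarith [hy.2], by linarith [hy.1]⟩
    rw [h1' hyI, h2' hxyI]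
  have e2 : (∫ y in Icc 0 (L - x), f y) = ∫ y in Icc 0 (L - x), f₁ y := by
    apply integral_congr_ae
    filter_upwards [ae_restrict_mem measurableSet_Icc, ae_restrict_of_ae h] with y hy h1'
    exact h1' ⟨hy.1, by linarith [hy.2]⟩
  have e3 : (∫ y in Icc x L, f y / y) = ∫ y in Icc x L, f₁ y / y := by
    apply integral_congr_ae
    filter_upwards [ae_restrict_mem measurableSet_Icc, ae_restrict_of_ae h] with y hy h1'
    rw [h1' ⟨le_trans hx0 hy.1, hy.2⟩]
  simp only [QCF]
  rw [e1, e2, e3, hfx hx]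


end QCFAux

open QCFAux Set ENNReal in
/-- The map `f ↦ Q_{C_T}(f) + Q_{F_T}(f)` is locally Lipschitz on L¹([0,L]). -/
theorem stmt_16 (L : ℝ) (hL : 0 < L) :
    ∀ R : ℝ, 0 < R → ∃ C : ℝ,
      ∀ f g : ℝ → ℝ, IntegrableOn f (Set.Icc 0 L) → IntegrableOn g (Set.Icc 0 L) →
        (∫ x in Set.Icc 0 L, |f x|) ≤ R → (∫ x in Set.Icc 0 L, |g x|) ≤ R →
        IntegrableOn (QCF L f) (Set.Icc 0 L) ∧
        (∫ x in Set.Icc 0 L, |QCF L f x - QCF L g x|)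
          ≤ C * ∫ x in Set.Icc 0 L, |f x - g x| := by
  intro R hR
  refine ⟨6 * R + 3, ?_⟩
  intro f g hfi hgi hfR hgR
  set f₁ : ℝ → ℝ := (Icc (0:ℝ) L).indicator (hfi.1.mk f) with hf₁def
  set g₁ : ℝ → ℝ := (Icc (0:ℝ) L).indicator (hgi.1.mk g) with hg₁def
  have hfm₁ : Measurable f₁ :=
    (hfi.1.stronglyMeasurable_mk.measurable).indicator measurableSet_Icc
  have hgm₁ : Measurable g₁ :=
    (hgi.1.stronglyMeasurable_mk.measurable).indicator measurableSet_Icc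
  have hfe : f =ᵐ[volume.restrict (Icc (0:ℝ) L)] f₁ := by
    refine hfi.1.ae_eq_mk.trans ?_
    filter_upwards [ae_restrict_mem measurableSet_Icc] with x hx
    rw [hf₁def, Set.indicator_of_mem hx]
  have hge : g =ᵐ[volume.restrict (Icc (0:ℝ) L)] g₁ := by
    refine hgi.1.ae_eq_mk.trans ?_
    filter_upwards [ae_restrict_mem measurableSet_Icc] with x hx
    rw [hg₁def, Set.indicator_of_mem hx]
  have hfimp : ∀ᵐ y ∂(volume : Measure ℝ), y ∈ Icc (0:ℝ) L → f y = f₁ y :=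
    ae_imp_of_ae_restrict hfe
  have hgimp : ∀ᵐ y ∂(volume : Measure ℝ), y ∈ Icc (0:ℝ) L → g y = g₁ y :=
    ae_imp_of_ae_restrict hge
  have hfi₁ : IntegrableOn f₁ (Icc 0 L) := hfi.congr hfe
  have hgi₁ : IntegrableOn g₁ (Icc 0 L) := hgi.congr hge
  have hfR₁ : (∫ x in Icc 0 L, |f₁ x|) ≤ R := by
    have e : (∫ x in Icc 0 L, |f₁ x|) = ∫ x in Icc 0 L, |f x| :=
      integral_congr_ae (hfe.mono fun x hx => by simp only [hx])
    rw [e]; exact hfR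
  have hgR₁ : (∫ x in Icc 0 L, |g₁ x|) ≤ R := by
    have e : (∫ x in Icc 0 L, |g₁ x|) = ∫ x in Icc 0 L, |g x| :=
      integral_congr_ae (hge.mono fun x hx => by simp only [hx])
    rw [e]; exact hgR
  obtain ⟨hQf₁, hQg₁, hbd₁⟩ := main_meas L R hfm₁ hgm₁ hfi₁ hgi₁ hfR₁ hgR₁
  have hQf : QCF L f =ᵐ[volume.restrict (Icc (0:ℝ) L)] QCF L f₁ := QCF_congr L hfimp
  have hQg : QCF L g =ᵐ[volume.restrict (Icc (0:ℝ) L)] QCF L g₁ := QCF_congr L hgimp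
  constructor
  · exact hQf₁.congr hQf.symm
  · have e1 : (∫ x in Icc 0 L, |QCF L f x - QCF L g x|)
        = ∫ x in Icc 0 L, |QCF L f₁ x - QCF L g₁ x| := by
      apply integral_congr_ae
      filter_upwards [hQf, hQg] with x h1 h2
      rw [h1, h2]
    have e2 : (∫ x in Icc 0 L, |f x - g x|) = ∫ x in Icc 0 L, |f₁ x - g₁ x| := by
      apply integral_congr_ae
      filter_upwards [hfe, hge] with x h1 h2
      rw [h1, h2]
    rw [e1, e2]
    exact hbd₁
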